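/- Let B be a Banach A-bimodule such that every continuous derivation D : A → B* is weakly compact. If Z^ℓ_{A**}(B**) = B** and every continuous derivation from A** into B*** is inner, then every continuous derivation from A into B* is inner. -/

import Mathlib

set_option maxHeartbeats 1000000


open ContinuousLinearMap NormedSpace

noncomputable section

section DualDef

/-- The topological dual `E →L[𝕜] 𝕜` of a normed space (formerly `NormedSpace.Dual`). -/
def Dual (𝕜 : Type*) [NontriviallyNormedField 𝕜] (E : Type*) [NormedAddCommGroup E]
    [NormedSpace 𝕜 E] : Type _ :=
  E →L[𝕜] 𝕜

variable (𝕜 : Type*) [NontriviallyNormedField 𝕜] (E : Type*) [NormedAddCommGroup E]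
  [NormedSpace 𝕜 E]

instance : NormedAddCommGroup (Dual 𝕜 E) := inferInstanceAs (NormedAddCommGroup (E →L[𝕜] 𝕜))

instance : NormedSpace 𝕜 (Dual 𝕜 E) := inferInstanceAs (NormedSpace 𝕜 (E →L[𝕜] 𝕜))

instance : FunLike (Dual 𝕜 E) E 𝕜 := inferInstanceAs (FunLike (E →L[𝕜] 𝕜) E 𝕜)

instance : ContinuousLinearMapClass (Dual 𝕜 E) 𝕜 E 𝕜 :=
  inferInstanceAs (ContinuousLinearMapClass (E →L[𝕜] 𝕜) 𝕜 E 𝕜)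

end DualDef

section Defs

variable {X Y Z W : Type} [NormedAddCommGroup X] [NormedSpace ℝ X]
  [NormedAddCommGroup Y] [NormedSpace ℝ Y] [NormedAddCommGroup Z] [NormedSpace ℝ Z]
  [NormedAddCommGroup W] [NormedSpace ℝ W]

/-- The first adjoint `m^*` of a bounded bilinear map `m : X × Y → Z`,
as a map `Z^* × X → Y^*`, `⟨m^*(z',x), y⟩ = ⟨z', m(x,y)⟩`. -/
def adj1 (m : X →L[ℝ] Y →L[ℝ] Z) :
    Dual ℝ Z →L[ℝ] X →L[ℝ] Dual ℝ Y :=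
  (((ContinuousLinearMap.compL ℝ X (Y →L[ℝ] Z) (Dual ℝ Y)).flip m).comp
    (ContinuousLinearMap.compL ℝ Y Z ℝ))

@[simp] lemma adj1_apply (m : X →L[ℝ] Y →L[ℝ] Z) (z' : Dual ℝ Z) (x : X) (y : Y) :
    adj1 m z' x y = z' (m x y) := rfl

/-- The first (left) Arens extension `m^{***} : X^{**} × Y^{**} → Z^{**}` of a
bounded bilinear map `m : X × Y → Z`. -/
def arens (m : X →L[ℝ] Y →L[ℝ] Z) :
    Dual ℝ (Dual ℝ X) →L[ℝ] Dual ℝ (Dual ℝ Y) →L[ℝ] Dual ℝ (Dual ℝ Z) :=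
  adj1 (adj1 (adj1 m))

/-- The adjoint (dual map) of a bounded linear map. -/
def dualMap' (D : X →L[ℝ] Y) : Dual ℝ Y →L[ℝ] Dual ℝ X :=
  (ContinuousLinearMap.compL ℝ X Y ℝ).flip D

@[simp] lemma dualMap'_apply (D : X →L[ℝ] Y) (g : Dual ℝ Y) (x : X) :
    dualMap' D g x = g (D x) := rfl

/-- The second adjoint `D'' : X^{**} → Y^{**}` of a bounded linear map. -/
def bidualMap (D : X →L[ℝ] Y) : Dual ℝ (Dual ℝ X) →L[ℝ] Dual ℝ (Dual ℝ Y) :=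
  dualMap' (dualMap' D)

/-- Given an action `t : A × X → X`, the transposed action on the dual `X^*`:
`(dualAct t) a f = f ∘ (t a)`. -/
def dualAct (t : W →L[ℝ] X →L[ℝ] X) : W →L[ℝ] Dual ℝ X →L[ℝ] Dual ℝ X :=
  ((ContinuousLinearMap.compL ℝ X X ℝ).flip).comp t

@[simp] lemma dualAct_apply (t : W →L[ℝ] X →L[ℝ] X) (a : W) (f : Dual ℝ X) (x : X) :
    dualAct t a f x = f (t a x) := rfl

/-- `D : A → X` is a derivation with respect to the multiplication `mul'` on `A`
and the left action `l` and right action `r` (`r a x` means `x · a`) of `A` on `X`. -/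
def IsDer {A' : Type} [NormedAddCommGroup A'] [NormedSpace ℝ A']
    (mul' : A' →L[ℝ] A' →L[ℝ] A') (l r : A' →L[ℝ] X →L[ℝ] X) (D : A' →L[ℝ] X) : Prop :=
  ∀ a b : A', D (mul' a b) = l a (D b) + r b (D a)

/-- `D : A → X` is an inner derivation: `D a = a·x - x·a` for some `x`. -/
def IsInner {A' : Type} [NormedAddCommGroup A'] [NormedSpace ℝ A']
    (l r : A' →L[ℝ] X →L[ℝ] X) (D : A' →L[ℝ] X) : Prop :=
  ∃ x : X, ∀ a : A', D a = l a x - r a x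

/-- The bimodule axioms for actions `l`, `r` of an algebra with multiplication `mul'`. -/
def IsBimod {A' : Type} [NormedAddCommGroup A'] [NormedSpace ℝ A']
    (mul' : A' →L[ℝ] A' →L[ℝ] A') (l r : A' →L[ℝ] X →L[ℝ] X) : Prop :=
  (∀ a b x, l (mul' a b) x = l a (l b x)) ∧
  (∀ a b x, r (mul' a b) x = r b (r a x)) ∧
  (∀ a b x, l a (r b x) = r b (l a x))

/-- weak*-to-weak* continuity of a map between dual spaces. -/
def WStarCont (f : Dual ℝ X → Dual ℝ Y) : Prop :=
  ∀ y : Y, Continuous fun φ : WeakDual ℝ X => f φ y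

end Defs

/-- A packaged Banach `A`-bimodule (used to form iterated duals). -/
structure ModPk (A : Type) [NormedAddCommGroup A] [NormedSpace ℝ A] : Type 1 where
  X : Type
  [grp : NormedAddCommGroup X]
  [mod : NormedSpace ℝ X]
  l : A →L[ℝ] X →L[ℝ] X
  r : A →L[ℝ] X →L[ℝ] X

attribute [instance] ModPk.grp ModPk.mod

variable {A : Type} [NormedAddCommGroup A] [NormedSpace ℝ A]

/-- The canonical dual of a packaged bimodule. -/
def ModPk.dual (P : ModPk A) : ModPk A :=
  ⟨Dual ℝ P.X, dualAct P.r, dualAct P.l⟩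

/-- The `n`-th iterated dual of a packaged bimodule. -/
def ModPk.iter (P : ModPk A) : ℕ → ModPk A
  | 0 => P
  | n+1 => (P.iter n).dual

/-- A "level": an algebra (given by its bilinear multiplication) together with a bimodule. -/
structure Lvl : Type 1 where
  Alg : Type
  [g1 : NormedAddCommGroup Alg]
  [m1 : NormedSpace ℝ Alg]
  Mod : Type
  [g2 : NormedAddCommGroup Mod]
  [m2 : NormedSpace ℝ Mod]
  mul : Alg →L[ℝ] Alg →L[ℝ] Alg
  l : Alg →L[ℝ] Mod →L[ℝ] Mod
  r : Alg →L[ℝ] Mod →L[ℝ] Mod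

attribute [instance] Lvl.g1 Lvl.m1 Lvl.g2 Lvl.m2

/-- Passing to second duals: `A^{**}` with the first Arens product, acting on `B^{**}`
via the Arens extensions `π_ℓ^{***}` and `π_r^{***}` of the module actions. -/
def Lvl.double (Q : Lvl) : Lvl where
  Alg := Dual ℝ (Dual ℝ Q.Alg)
  Mod := Dual ℝ (Dual ℝ Q.Mod)
  mul := arens Q.mul
  l := arens Q.l
  r := (arens Q.r.flip).flip

/-- Iterated even duals: `Lvl.iter Q n` is the level `(A^{(2n)}, B^{(2n)})`. -/
def Lvl.iter (Q : Lvl) : ℕ → Lvl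
  | 0 => Q
  | n+1 => (Q.iter n).double

/-- The canonical embedding `A → A^{(2n)}`. -/
def Lvl.embA (Q : Lvl) : (n : ℕ) → Q.Alg →L[ℝ] (Q.iter n).Alg
  | 0 => ContinuousLinearMap.id ℝ _
  | n+1 => (inclusionInDoubleDual ℝ ((Q.iter n).Alg)).comp (Q.embA n)

/-- The canonical embedding `B → B^{(2n)}`. -/
def Lvl.embM (Q : Lvl) : (n : ℕ) → Q.Mod →L[ℝ] (Q.iter n).Mod
  | 0 => ContinuousLinearMap.id ℝ _
  | n+1 => (inclusionInDoubleDual ℝ ((Q.iter n).Mod)).comp (Q.embM n)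

/-- The left-topological-center condition `Z^ℓ_{A^{(2n+2)}}(B^{(2n+2)}) = B^{(2n+2)}`,
stated at the double of a level `Q`: for each `b` in the second-dual module, the map
`a ↦ b·a` is weak*-to-weak* continuous. -/
def Lvl.doubleZl (Q : Lvl) : Prop :=
  ∀ b : (Q.double).Mod, WStarCont (X := Dual ℝ Q.Alg) (Y := Dual ℝ Q.Mod)
    (fun a => (Q.double).r a b)

/-- The base level of a Banach algebra `A` with a Banach `A`-bimodule `B`. -/
def lvlOf (A : Type) [NormedRing A] [NormedAlgebra ℝ A]
    (B : Type) [NormedAddCommGroup B] [NormedSpace ℝ B]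
    (l r : A →L[ℝ] B →L[ℝ] B) : Lvl :=
  Lvl.mk A B (ContinuousLinearMap.mul ℝ A) l r

@[ext] lemma Dual.ext'' {E : Type} [NormedAddCommGroup E] [NormedSpace ℝ E]
    {f g : Dual ℝ E} (h : ∀ x, f x = g x) : f = g :=
  ContinuousLinearMap.ext h

private def evalL {E : Type} [NormedAddCommGroup E] [NormedSpace ℝ E] (y : E) :
    Dual ℝ E →ₗ[ℝ] ℝ where
  toFun F := F y
  map_add' F G := rfl
  map_smul' c F := rfl

lemma wstar_vanish {A : Type} [NormedAddCommGroup A] [NormedSpace ℝ A]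
    (χ : Dual ℝ (Dual ℝ A) →ₗ[ℝ] ℝ)
    (hc : Continuous fun F : WeakDual ℝ (Dual ℝ A) => χ F)
    (h0 : ∀ a : A, χ (inclusionInDoubleDual ℝ A a) = 0) :
    ∀ F : Dual ℝ (Dual ℝ A), χ F = 0 := by
  classical
  set e : WeakDual ℝ (Dual ℝ A) → (Dual ℝ A) → ℝ := fun F y => F y with he
  have h1 : (fun F : WeakDual ℝ (Dual ℝ A) => χ F) ⁻¹' Set.Ioo (-1 : ℝ) 1 ∈
      nhds (0 : WeakDual ℝ (Dual ℝ A)) := by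
    have := hc.tendsto 0
    rw [show χ (0 : WeakDual ℝ (Dual ℝ A)) = 0 from map_zero χ] at this
    exact this (Ioo_mem_nhds (by norm_num) (by norm_num))
  have h1' : (fun F : WeakDual ℝ (Dual ℝ A) => χ F) ⁻¹' Set.Ioo (-1 : ℝ) 1 ∈
      @nhds _ (TopologicalSpace.induced e Pi.topologicalSpace) 0 := h1
  rw [nhds_induced, Filter.mem_comap] at h1'
  obtain ⟨T, hT, hTsub⟩ := h1'
  have he0 : e 0 = fun _ => (0 : ℝ) := rfl
  rw [he0, nhds_pi, Filter.mem_pi] at hT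
  obtain ⟨I, hIfin, t, ht, hpi⟩ := hT
  -- vanishing on the common kernel
  have hvan : ∀ F : Dual ℝ (Dual ℝ A), (∀ f ∈ I, F f = 0) → χ F = 0 := by
    intro F hF
    by_contra h
    have hmem : ∀ c : ℝ, e (c • F) ∈ Set.pi I t := by
      intro c f hf
      have : (c • F) f = 0 := by
        show c • F f = 0
        rw [hF f hf, smul_zero]
      show (c • F) f ∈ t f
      rw [this]
      exact mem_of_mem_nhds (ht f)
    have hlt : ∀ c : ℝ, χ (c • F) ∈ Set.Ioo (-1 : ℝ) 1 := fun c =>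
      hTsub (hpi (hmem c))
    have := (hlt ((χ F)⁻¹)).2
    rw [map_smul] at this
    simp only [smul_eq_mul, inv_mul_cancel₀ h] at this
    exact lt_irrefl _ this
  haveI : Fintype I := hIfin.fintype
  set L : I → (Dual ℝ (Dual ℝ A)) →ₗ[ℝ] ℝ := fun i => evalL (i : Dual ℝ A) with hL
  have hker : ⨅ i : I, LinearMap.ker (L i) ≤ LinearMap.ker χ := by
    intro F hF
    rw [Submodule.mem_iInf] at hF
    exact hvan F (fun f hf => hF ⟨f, hf⟩)
  obtain ⟨c, hcL⟩ := (Finsupp.mem_span_range_iff_exists_finsupp).1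
    (mem_span_of_iInf_ker_le_ker hker)
  set f0 : Dual ℝ A := c.sum fun i a => a • (i : Dual ℝ A) with hf0
  have hrep : ∀ F : Dual ℝ (Dual ℝ A), χ F = F f0 := by
    intro F
    rw [← hcL, hf0]
    simp [Finsupp.sum, _root_.evalL, L]
    rfl
  have hf00 : f0 = 0 := by
    ext a
    have := h0 a
    rw [hrep (inclusionInDoubleDual ℝ A a)] at this
    exact this
  intro F
  rw [hrep, hf00, map_zero]

/-- **Theorem 2-12.** Let `B` be a Banach `A`-bimodule such that every continuous
derivation `D : A → B*` is weakly compact (`D''(A**) ⊆ B*`). If `Z^ℓ_{A**}(B**) = B**`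
and every continuous derivation `A** → B***` is inner, then every continuous derivation
`A → B*` is inner. -/
theorem stmt9 (A : Type) [NormedRing A] [NormedAlgebra ℝ A] [CompleteSpace A]
    (B : Type) [NormedAddCommGroup B] [NormedSpace ℝ B] [CompleteSpace B]
    (l r : A →L[ℝ] B →L[ℝ] B)
    (hbim : IsBimod (ContinuousLinearMap.mul ℝ A) l r)
    -- every continuous derivation `A → B*` is weakly compact: `D''(A**) ⊆ B*`
    (hwc : ∀ D : A →L[ℝ] Dual ℝ B,
      IsDer (ContinuousLinearMap.mul ℝ A) (dualAct r) (dualAct l) D →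
      ∀ F : Dual ℝ (Dual ℝ A), ∃ b' : Dual ℝ B,
        bidualMap D F = inclusionInDoubleDual ℝ (Dual ℝ B) b')
    -- `Z^ℓ_{A**}(B**) = B**`
    (hZ : ∀ b'' : Dual ℝ (Dual ℝ B),
      WStarCont (X := Dual ℝ A) (Y := Dual ℝ B) (fun F => (arens r.flip).flip F b''))
    -- `H¹(A**, B***) = 0`
    (hcoh : ∀ D2 : Dual ℝ (Dual ℝ A) →L[ℝ] Dual ℝ (Dual ℝ (Dual ℝ B)),
      IsDer (arens (ContinuousLinearMap.mul ℝ A))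
        (dualAct (W := Dual ℝ (Dual ℝ A)) (X := Dual ℝ (Dual ℝ B)) ((arens r.flip).flip))
        (dualAct (W := Dual ℝ (Dual ℝ A)) (X := Dual ℝ (Dual ℝ B)) (arens l)) D2 →
      IsInner
        (dualAct (W := Dual ℝ (Dual ℝ A)) (X := Dual ℝ (Dual ℝ B)) ((arens r.flip).flip))
        (dualAct (W := Dual ℝ (Dual ℝ A)) (X := Dual ℝ (Dual ℝ B)) (arens l)) D2) :
    -- `H¹(A, B*) = 0`
    ∀ D : A →L[ℝ] Dual ℝ B,
      IsDer (ContinuousLinearMap.mul ℝ A) (dualAct r) (dualAct l) D →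
      IsInner (dualAct r) (dualAct l) D := by
  intro D hder
  have key : ∀ (a : A) (b'' : Dual ℝ (Dual ℝ B)),
      adj1 (ContinuousLinearMap.mul ℝ A) (dualMap' D b'') a
        = dualMap' D (arens r.flip b'' (inclusionInDoubleDual ℝ A a))
          + adj1 (adj1 l) b'' (D a) := by
    intro a b''
    ext b
    show b'' (D (ContinuousLinearMap.mul ℝ A a b)) =
      (dualMap' D (arens r.flip b'' (inclusionInDoubleDual ℝ A a))
        + adj1 (adj1 l) b'' (D a)) b
    rw [hder a b, map_add]
    rfl
  -- `D''` is a derivation `A** → B***`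
  have hder2 : IsDer (arens (ContinuousLinearMap.mul ℝ A))
      (dualAct (W := Dual ℝ (Dual ℝ A)) (X := Dual ℝ (Dual ℝ B)) ((arens r.flip).flip))
      (dualAct (W := Dual ℝ (Dual ℝ A)) (X := Dual ℝ (Dual ℝ B)) (arens l))
      (bidualMap D) := by
    intro F G
    ext b''
    obtain ⟨b', hb'⟩ := hwc D hder G
    -- the difference of the two sides, as a weak*-continuous linear functional of `F`
    set ψ₁ : Dual ℝ A := adj1 (adj1 (ContinuousLinearMap.mul ℝ A)) G (dualMap' D b'')
      with hψ₁
    set ψ₂ : Dual ℝ A := dualMap' D (arens l G b'') with hψ₂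
    set χ : Dual ℝ (Dual ℝ A) →ₗ[ℝ] ℝ :=
      { toFun := fun H => H ψ₁ - H ψ₂ - arens r.flip b'' H b'
        map_add' := by
          intro H K
          simp only [ContinuousLinearMap.add_apply, map_add]
          change (H ψ₁ + K ψ₁) - (H ψ₂ + K ψ₂) - (arens r.flip b'' H b' + arens r.flip b'' K b') = _
          ring
        map_smul' := by
          intro c H
          simp only [ContinuousLinearMap.smul_apply, map_smul, smul_eq_mul,
            RingHom.id_apply]
          change c * H ψ₁ - c * H ψ₂ - c * (arens r.flip b'' H b') = _
          ring } with hχ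
    have hcont : Continuous fun H : WeakDual ℝ (Dual ℝ A) => χ H := by
      exact ((WeakDual.eval_continuous ψ₁).sub (WeakDual.eval_continuous ψ₂)).sub
        (hZ b'' b')
    have hvanish : ∀ a : A, χ (inclusionInDoubleDual ℝ A a) = 0 := by
      intro a
      have e1 : inclusionInDoubleDual ℝ A a ψ₁
          = G (dualMap' D (arens r.flip b'' (inclusionInDoubleDual ℝ A a)))
            + G (adj1 (adj1 l) b'' (D a)) := by
        show G (adj1 (ContinuousLinearMap.mul ℝ A) (dualMap' D b'') a) = _
        rw [key a b'', map_add]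
      have e2 : inclusionInDoubleDual ℝ A a ψ₂ = G (adj1 (adj1 l) b'' (D a)) := rfl
      have e3 : arens r.flip b'' (inclusionInDoubleDual ℝ A a) b'
          = G (dualMap' D (arens r.flip b'' (inclusionInDoubleDual ℝ A a))) := by
        have : bidualMap D G (arens r.flip b'' (inclusionInDoubleDual ℝ A a))
            = inclusionInDoubleDual ℝ (Dual ℝ B) b'
              (arens r.flip b'' (inclusionInDoubleDual ℝ A a)) := by rw [hb']; rfl
        exact (this.symm : _)
      show inclusionInDoubleDual ℝ A a ψ₁ - inclusionInDoubleDual ℝ A a ψ₂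
          - arens r.flip b'' (inclusionInDoubleDual ℝ A a) b' = 0
      rw [e1, e2, e3]
      ring
    have hF := wstar_vanish χ hcont hvanish F
    have hF' : F ψ₁ - F ψ₂ - arens r.flip b'' F b' = 0 := hF
    have g1 : bidualMap D (arens (ContinuousLinearMap.mul ℝ A) F G) b'' = F ψ₁ := rfl
    have g2 : dualAct (W := Dual ℝ (Dual ℝ A)) (X := Dual ℝ (Dual ℝ B))
        ((arens r.flip).flip) F (bidualMap D G) b'' = arens r.flip b'' F b' := by
      show bidualMap D G (arens r.flip b'' F) = _
      rw [hb']
      rfl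
    have g3 : dualAct (W := Dual ℝ (Dual ℝ A)) (X := Dual ℝ (Dual ℝ B))
        (arens l) G (bidualMap D F) b'' = F ψ₂ := rfl
    show bidualMap D (arens (ContinuousLinearMap.mul ℝ A) F G) b''
        = (dualAct (W := Dual ℝ (Dual ℝ A)) (X := Dual ℝ (Dual ℝ B))
            ((arens r.flip).flip) F (bidualMap D G)
          + dualAct (W := Dual ℝ (Dual ℝ A)) (X := Dual ℝ (Dual ℝ B))
            (arens l) G (bidualMap D F)) b''
    change bidualMap D (arens (ContinuousLinearMap.mul ℝ A) F G) b'' = dualAct (W := Dual ℝ (Dual ℝ A)) (X := Dual ℝ (Dual ℝ B)) ((arens r.flip).flip) F (bidualMap D G) b'' + dualAct (W := Dual ℝ (Dual ℝ A)) (X := Dual ℝ (Dual ℝ B)) (arens l) G (bidualMap D F) b''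
    rw [g1, g2, g3]
    linarith
  obtain ⟨Λ, hΛ⟩ := hcoh (bidualMap D) hder2
  refine ⟨dualMap' (inclusionInDoubleDual ℝ B) Λ, fun a => ?_⟩
  ext b
  have h := hΛ (inclusionInDoubleDual ℝ A a)
  calc D a b = bidualMap D (inclusionInDoubleDual ℝ A a) (inclusionInDoubleDual ℝ B b) :=
        rfl
    _ = (dualAct (W := Dual ℝ (Dual ℝ A)) (X := Dual ℝ (Dual ℝ B))
          ((arens r.flip).flip) (inclusionInDoubleDual ℝ A a) Λ
        - dualAct (W := Dual ℝ (Dual ℝ A)) (X := Dual ℝ (Dual ℝ B))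
          (arens l) (inclusionInDoubleDual ℝ A a) Λ) (inclusionInDoubleDual ℝ B b) := by
        rw [h]
    _ = (dualAct r a (dualMap' (inclusionInDoubleDual ℝ B) Λ)
        - dualAct l a (dualMap' (inclusionInDoubleDual ℝ B) Λ)) b := rfl
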